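/- For fixed β ∈ (1,2) and fixed x > 0 with x ≠ 1, the function F(y) = φ(x)^{(β-1)/β} φ(y)^{1/β} - (x^{β-1} y + (1-β)x - y + β-1), where φ(z) = z^β - 1 - β(z-1), satisfies F(x) = 0 and F''(y) > 0 for all y > 0 on the same side of 1 as x (i.e., for y < 1 if x < 1, and y > 1 if x > 1); hence F(y) > 0 for all such y ≠ x. -/

import Mathlib

open Real Set

private lemma phi_pos {β z : ℝ} (hβ : 1 < β) (hz : 0 ≤ z) (hz1 : z ≠ 1) :
    0 < z ^ β - 1 - β * (z - 1) := by
  have h := one_add_mul_self_lt_rpow_one_add (s := z - 1) (by linarith)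
    (fun h => hz1 (by linarith)) hβ
  rw [show (1 : ℝ) + (z - 1) = z by ring] at h
  linarith

/-- First-derivative candidate. -/
private noncomputable def Dfun (β x c : ℝ) : ℝ → ℝ := fun y =>
  c * (y ^ β - 1 - β * (y - 1)) ^ (1 / β - 1) * (y ^ (β - 1) - 1) - (x ^ (β - 1) - 1)

/-- The positive bracket `g`. -/
private noncomputable def gfun (β : ℝ) : ℝ → ℝ := fun y =>
  (β - 1) * y ^ (β - 2) + (2 - β) * y ^ (β - 1) - 1

/-- Second-derivative candidate. -/
private noncomputable def Efun (β c : ℝ) : ℝ → ℝ := fun y =>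
  c * (β - 1) * (y ^ β - 1 - β * (y - 1)) ^ (1 / β - 2) * gfun β y

private lemma key (β : ℝ) (hβ1 : 1 < β) (hβ2 : β < 2) (S : Set ℝ) (hSo : IsOpen S)
    (hScvx : Convex ℝ S) (hS : ∀ y ∈ S, 0 < y ∧ y ≠ 1)
    (x : ℝ) (hxS : x ∈ S) (F : ℝ → ℝ)
    (hF : F = fun y => (x ^ β - 1 - β * (x - 1)) ^ ((β - 1) / β) *
        (y ^ β - 1 - β * (y - 1)) ^ (1 / β) -
      (x ^ (β - 1) * y + (1 - β) * x - y + β - 1)) :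
    F x = 0 ∧ (∀ y ∈ S, 0 < deriv (deriv F) y) ∧ (∀ y ∈ S, y ≠ x → 0 < F y) := by
  have hβ0 : (0 : ℝ) < β := by linarith
  have hβne : β ≠ 0 := hβ0.ne'
  obtain ⟨hx0, hx1⟩ := hS x hxS
  have hφx : 0 < x ^ β - 1 - β * (x - 1) := phi_pos hβ1 hx0.le hx1
  set c : ℝ := (x ^ β - 1 - β * (x - 1)) ^ ((β - 1) / β) with hc
  have hcpos : 0 < c := rpow_pos_of_pos hφx _
  have hφpos : ∀ y ∈ S, 0 < y ^ β - 1 - β * (y - 1) := fun y hy =>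
    phi_pos hβ1 (hS y hy).1.le (hS y hy).2
  -- derivative of φ
  have hφderiv : ∀ y ∈ S,
      HasDerivAt (fun t => t ^ β - 1 - β * (t - 1)) (β * y ^ (β - 1) - β) y := by
    intro y hy
    have h1 : HasDerivAt (fun t : ℝ => t ^ β) (β * y ^ (β - 1)) y :=
      hasDerivAt_rpow_const (Or.inl (hS y hy).1.ne')
    have h2 : HasDerivAt (fun t : ℝ => β * (t - 1)) β y := by
      simpa using ((hasDerivAt_id y).sub_const 1).const_mul β
    exact (h1.sub_const 1).sub h2
  -- Step 1: F has derivative D y at each point of S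
  have step1 : ∀ y ∈ S, HasDerivAt F (Dfun β x c y) y := by
    intro y hy
    have hφy := hφpos y hy
    have h3 : HasDerivAt (fun t => (t ^ β - 1 - β * (t - 1)) ^ (1 / β))
        ((β * y ^ (β - 1) - β) * (1 / β) * (y ^ β - 1 - β * (y - 1)) ^ (1 / β - 1)) y :=
      (hφderiv y hy).rpow_const (Or.inl hφy.ne')
    have h4 : HasDerivAt (fun t : ℝ => x ^ (β - 1) * t + (1 - β) * x - t + β - 1)
        (x ^ (β - 1) - 1) y := by
      simpa using
        (((((hasDerivAt_id y).const_mul (x ^ (β - 1))).add_const ((1 - β) * x)).sub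
          (hasDerivAt_id y)).add_const β).sub_const 1
    have h5 := (h3.const_mul c).sub h4
    have key1 : (β * y ^ (β - 1) - β) * (1 / β) = y ^ (β - 1) - 1 := by field_simp
    have h6 : HasDerivAt F
        (c * ((β * y ^ (β - 1) - β) * (1 / β) * (y ^ β - 1 - β * (y - 1)) ^ (1 / β - 1)) -
          (x ^ (β - 1) - 1)) y := by rw [hF]; exact h5
    have heq : c * ((β * y ^ (β - 1) - β) * (1 / β) * (y ^ β - 1 - β * (y - 1)) ^ (1 / β - 1)) -
        (x ^ (β - 1) - 1) = Dfun β x c y := by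
      simp only [Dfun]; rw [key1]; ring
    exact heq ▸ h6
  have step2 : ∀ y ∈ S, deriv F y = Dfun β x c y := fun y hy => (step1 y hy).deriv
  -- Step 3: deriv F has derivative E y at each point of S
  have step3 : ∀ y ∈ S, HasDerivAt (deriv F) (Efun β c y) y := by
    intro y hy
    obtain ⟨hy0, hy1⟩ := hS y hy
    have hφy := hφpos y hy
    have h6 : HasDerivAt (fun t => (t ^ β - 1 - β * (t - 1)) ^ (1 / β - 1))
        ((β * y ^ (β - 1) - β) * (1 / β - 1) * (y ^ β - 1 - β * (y - 1)) ^ (1 / β - 1 - 1)) y :=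
      (hφderiv y hy).rpow_const (Or.inl hφy.ne')
    have h7 : HasDerivAt (fun t : ℝ => t ^ (β - 1) - 1) ((β - 1) * y ^ (β - 2)) y := by
      have h := hasDerivAt_rpow_const (x := y) (p := β - 1) (Or.inl hy0.ne')
      rw [show β - 1 - 1 = β - 2 by ring] at h
      exact h.sub_const 1
    have h8 : HasDerivAt (Dfun β x c)
        ((c * ((β * y ^ (β - 1) - β) * (1 / β - 1) * (y ^ β - 1 - β * (y - 1)) ^ (1 / β - 1 - 1))) *
            (y ^ (β - 1) - 1) +
          (c * (y ^ β - 1 - β * (y - 1)) ^ (1 / β - 1)) * ((β - 1) * y ^ (β - 2))) y :=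
      ((h6.const_mul c).mul h7).sub_const _
    have hev : deriv F =ᶠ[nhds y] Dfun β x c :=
      Filter.eventuallyEq_of_mem (hSo.mem_nhds hy) step2
    have h9 := h8.congr_of_eventuallyEq hev
    -- identify the derivative value with E y
    have hb : y ^ (β - 1) = y * y ^ (β - 2) := by
      have h := rpow_add hy0 1 (β - 2)
      rw [rpow_one, show 1 + (β - 2) = β - 1 by ring] at h
      exact h
    have hY : y ^ β = y * (y * y ^ (β - 2)) := by
      have h := rpow_add hy0 1 (β - 1)
      rw [rpow_one, show 1 + (β - 1) = β by ring] at h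
      rw [h, hb]
    have hexp1 : (y ^ β - 1 - β * (y - 1)) ^ (1 / β - 1 - 1)
        = (y ^ β - 1 - β * (y - 1)) ^ (1 / β - 2) := by
      rw [show 1 / β - 1 - 1 = 1 / β - 2 by ring]
    have hexp2 : (y ^ β - 1 - β * (y - 1)) ^ (1 / β - 1)
        = (y ^ β - 1 - β * (y - 1)) ^ (1 / β - 2) * (y ^ β - 1 - β * (y - 1)) := by
      rw [show 1 / β - 1 = (1 / β - 2) + 1 by ring, rpow_add hφy, rpow_one]
    have hid : (c * ((β * y ^ (β - 1) - β) * (1 / β - 1) *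
          (y ^ β - 1 - β * (y - 1)) ^ (1 / β - 1 - 1))) * (y ^ (β - 1) - 1) +
        (c * (y ^ β - 1 - β * (y - 1)) ^ (1 / β - 1)) * ((β - 1) * y ^ (β - 2))
        = Efun β c y := by
      simp only [Efun, gfun]
      rw [hexp1, hexp2]
      rw [hb, hY]
      field_simp
      ring
    exact hid ▸ h9
  -- Step 4: positivity of g on S
  have hgpos : ∀ y ∈ S, 0 < gfun β y := by
    intro y hy
    obtain ⟨hy0, hy1⟩ := hS y hy
    have ha : 0 < y ^ (β - 2) := rpow_pos_of_pos hy0 _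
    have hbern := rpow_one_add_lt_one_add_mul_self (s := y - 1) (by linarith)
      (fun h => hy1 (by linarith)) (p := 2 - β) (by linarith) (by linarith)
    rw [show (1 : ℝ) + (y - 1) = y by ring] at hbern
    have hmul : y ^ (β - 2) * y ^ (2 - β) = 1 := by
      rw [← rpow_add hy0]; norm_num
    have hlt := mul_lt_mul_of_pos_left hbern ha
    rw [hmul] at hlt
    have hby : y ^ (β - 1) = y * y ^ (β - 2) := by
      have h := rpow_add hy0 1 (β - 2)
      rw [rpow_one, show 1 + (β - 2) = β - 1 by ring] at h
      exact h
    simp only [gfun, hby]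
    nlinarith [hlt, ha]
  have hEpos : ∀ y ∈ S, 0 < Efun β c y := by
    intro y hy
    have h1 := rpow_pos_of_pos (hφpos y hy) (1 / β - 2)
    have h2 := hgpos y hy
    show 0 < c * (β - 1) * (y ^ β - 1 - β * (y - 1)) ^ (1 / β - 2) * gfun β y
    exact mul_pos (mul_pos (mul_pos hcpos (by linarith)) h1) h2
  have hd2 : ∀ y ∈ S, 0 < deriv (deriv F) y := by
    intro y hy
    rw [(step3 y hy).deriv]
    exact hEpos y hy
  -- F x = 0
  have hFx : F x = 0 := by
    rw [hF]
    show c * (x ^ β - 1 - β * (x - 1)) ^ (1 / β) -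
      (x ^ (β - 1) * x + (1 - β) * x - x + β - 1) = 0
    have h1 : c * (x ^ β - 1 - β * (x - 1)) ^ (1 / β) = x ^ β - 1 - β * (x - 1) := by
      rw [hc, ← rpow_add hφx, show (β - 1) / β + 1 / β = 1 by field_simp; ring, rpow_one]
    have h2 : x ^ (β - 1) * x = x ^ β := by
      have h := rpow_add_one hx0.ne' (β - 1)
      rw [show β - 1 + 1 = β by ring] at h
      exact h.symm
    rw [h1, h2]; ring
  -- deriv F x = 0
  have hDx : deriv F x = 0 := by
    rw [step2 x hxS]
    simp only [Dfun]
    have h1 : c * (x ^ β - 1 - β * (x - 1)) ^ (1 / β - 1) = 1 := by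
      rw [hc, ← rpow_add hφx, show (β - 1) / β + (1 / β - 1) = 0 by field_simp; ring, rpow_zero]
    rw [h1]; ring
  -- strict monotonicity of deriv F on S
  have hcontD : ContinuousOn (deriv F) S := fun y hy =>
    ((step3 y hy).differentiableAt.continuousAt).continuousWithinAt
  have hmono : StrictMonoOn (deriv F) S :=
    strictMonoOn_of_deriv_pos hScvx hcontD
      (fun z hz => hd2 z (by rwa [hSo.interior_eq] at hz))
  refine ⟨hFx, hd2, fun y hy hyx => ?_⟩
  have hIcc : ∀ a b : ℝ, a ∈ S → b ∈ S → Icc a b ⊆ S := fun a b ha hb =>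
    hScvx.ordConnected.out ha hb
  rcases lt_or_gt_of_ne hyx with hlt | hgt
  · -- y < x
    have hsub : Icc y x ⊆ S := hIcc _ _ hy hxS
    obtain ⟨ξ, hξ, hslope⟩ := exists_hasDerivAt_eq_slope F (deriv F) hlt
      (fun z hz => ((step1 z (hsub hz)).continuousAt).continuousWithinAt)
      (fun z hz => by
        have h := step1 z (hsub (Ioo_subset_Icc_self hz))
        rw [h.deriv]; exact h)
    have hξS : ξ ∈ S := hsub (Ioo_subset_Icc_self hξ)
    have hm : deriv F ξ < deriv F x := hmono hξS hxS hξ.2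
    rw [hDx, hslope, hFx] at hm
    have hxy : 0 < x - y := by linarith
    rcases div_neg_iff.mp hm with ⟨h3, h4⟩ | ⟨h3, h4⟩
    · linarith
    · linarith
  · -- x < y
    have hsub : Icc x y ⊆ S := hIcc _ _ hxS hy
    obtain ⟨ξ, hξ, hslope⟩ := exists_hasDerivAt_eq_slope F (deriv F) hgt
      (fun z hz => ((step1 z (hsub hz)).continuousAt).continuousWithinAt)
      (fun z hz => by
        have h := step1 z (hsub (Ioo_subset_Icc_self hz))
        rw [h.deriv]; exact h)
    have hξS : ξ ∈ S := hsub (Ioo_subset_Icc_self hξ)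
    have hm : deriv F x < deriv F ξ := hmono hxS hξS hξ.1
    rw [hDx, hslope, hFx] at hm
    have hxy : 0 < y - x := by linarith
    rcases div_pos_iff.mp hm with ⟨h3, h4⟩ | ⟨h3, h4⟩
    · linarith
    · linarith

theorem F_convexity_positivity (β : ℝ) (hβ1 : 1 < β) (hβ2 : β < 2)
    (x : ℝ) (hx : 0 < x) (hx1 : x ≠ 1)
    (φ : ℝ → ℝ) (hφ : ∀ z : ℝ, φ z = z ^ β - 1 - β * (z - 1))
    (F : ℝ → ℝ)
    (hF : ∀ y : ℝ, F y = φ x ^ ((β - 1) / β) * φ y ^ (1 / β) -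
      (x ^ (β - 1) * y + (1 - β) * x - y + β - 1)) :
    F x = 0 ∧
    (∀ y : ℝ, ((x < 1 ∧ 0 < y ∧ y < 1) ∨ (1 < x ∧ 1 < y)) →
      0 < deriv (deriv F) y) ∧
    (∀ y : ℝ, ((x < 1 ∧ 0 < y ∧ y < 1) ∨ (1 < x ∧ 1 < y)) → y ≠ x → 0 < F y) := by
  have hFeq : F = fun y => (x ^ β - 1 - β * (x - 1)) ^ ((β - 1) / β) *
      (y ^ β - 1 - β * (y - 1)) ^ (1 / β) -
      (x ^ (β - 1) * y + (1 - β) * x - y + β - 1) := by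
    funext y; rw [hF y, hφ x, hφ y]
  rcases lt_or_gt_of_ne hx1 with hxlt | hxgt
  · have hk := key β hβ1 hβ2 (Ioo 0 1) isOpen_Ioo (convex_Ioo 0 1)
      (fun y hy => ⟨hy.1, ne_of_lt hy.2⟩) x ⟨hx, hxlt⟩ F hFeq
    refine ⟨hk.1, ?_, ?_⟩
    · rintro y (⟨_, hy0, hy1⟩ | ⟨h1x, _⟩)
      · exact hk.2.1 y ⟨hy0, hy1⟩
      · linarith
    · rintro y (⟨_, hy0, hy1⟩ | ⟨h1x, _⟩) hyx
      · exact hk.2.2 y ⟨hy0, hy1⟩ hyx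
      · linarith
  · have hk := key β hβ1 hβ2 (Ioi 1) isOpen_Ioi (convex_Ioi 1)
      (fun y hy => ⟨lt_trans one_pos hy, ne_of_gt hy⟩) x hxgt F hFeq
    refine ⟨hk.1, ?_, ?_⟩
    · rintro y (⟨hlt, _, _⟩ | ⟨_, hy1⟩)
      · linarith
      · exact hk.2.1 y hy1
    · rintro y (⟨hlt, _, _⟩ | ⟨_, hy1⟩) hyx
      · linarith
      · exact hk.2.2 y hy1 hyx
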